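/- Let n ≥ 0, let U ⊆ ℝ^{n+1} be open, and let ρ : U → ℝ be smooth. Define ρ̃(t,y) := t²·ρ(y/t) on the open cone {(t,y) ∈ (0,∞)×ℝ^{n+1} : y/t ∈ U}. Then for every x ∈ U, the determinant of the (n+2)×(n+2) Hessian of ρ̃ (with respect to all n+2 variables) at the point (1,x) equals J[ρ](x). -/

import Mathlib

open MeasureTheory Topology

noncomputable def pd {m : ℕ} (f : (Fin m → ℝ) → ℝ) (i : Fin m) (x : Fin m → ℝ) : ℝ :=
  fderiv ℝ f x (Pi.single i 1)

noncomputable def hess {m : ℕ} (f : (Fin m → ℝ) → ℝ) (x : Fin m → ℝ) :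
    Matrix (Fin m) (Fin m) ℝ :=
  Matrix.of fun i j => pd (pd f j) i x

noncomputable def Jop {n : ℕ} (ρ : (Fin (n + 1) → ℝ) → ℝ) (x : Fin (n + 1) → ℝ) : ℝ :=
  (Matrix.of (fun I J : Fin (n + 2) =>
    Fin.cases (Fin.cases (2 * ρ x) (fun j => pd ρ j x) J)
      (fun i => Fin.cases (pd ρ i x) (fun j => hess ρ x i j) J) I)).det

structure IsDefiningFn (n : ℕ) (Ω V : Set (Fin (n + 1) → ℝ)) (ρ : (Fin (n + 1) → ℝ) → ℝ) : Prop where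
  openV : IsOpen V
  frontier_sub : frontier Ω ⊆ V
  smooth : ContDiffOn ℝ (⊤ : ℕ∞) ρ V
  neg_iff : ∀ x ∈ V, (x ∈ Ω ↔ ρ x < 0)
  zero_bdry : ∀ x ∈ frontier Ω, ρ x = 0
  grad_ne : ∀ x ∈ frontier Ω, ∃ i, pd ρ i x ≠ 0

def StrictlyConvexWith (n : ℕ) (Ω : Set (Fin (n + 1) → ℝ)) (ρ : (Fin (n + 1) → ℝ) → ℝ) : Prop :=
  ∀ p ∈ frontier Ω, ∀ w : Fin (n + 1) → ℝ, w ≠ 0 →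
    (∑ i, pd ρ i p * w i) = 0 → 0 < ∑ i, ∑ j, hess ρ p i j * w i * w j

structure IsBddStrictlyConvexDomain (n : ℕ) (Ω : Set (Fin (n + 1) → ℝ)) : Prop where
  isOpen : IsOpen Ω
  nonempty : Ω.Nonempty
  bounded : Bornology.IsBounded Ω
  convexBdry : ∃ V ρ, IsDefiningFn n Ω V ρ ∧ StrictlyConvexWith n Ω ρ

/-- The degree-2 homogeneous extension `ρ̃(t,y) = t^2 ρ(y/t)`. -/
noncomputable def homog2 {n : ℕ} (ρ : (Fin (n + 1) → ℝ) → ℝ) (z : Fin (n + 2) → ℝ) : ℝ :=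
  z 0 ^ 2 * ρ fun i : Fin (n + 1) => z i.succ / z 0

section Stmt18Aux
open ContinuousLinearMap
variable {n : ℕ}

/-- coordinate projection as a CLM, with instances pinned down -/
noncomputable abbrev prj {m : ℕ} (i : Fin m) : (Fin m → ℝ) →L[ℝ] ℝ :=
  ContinuousLinearMap.proj (R := ℝ) (φ := fun _ : Fin m => ℝ) i

lemma hasFDerivAt_coord {m : ℕ} (i : Fin m) (z : Fin m → ℝ) :
    HasFDerivAt (fun w : Fin m → ℝ => w i) (prj i) z := hasFDerivAt_apply i z

variable {n : ℕ}

/-- dehomogenization map -/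
noncomputable def gm (n : ℕ) (z : Fin (n + 2) → ℝ) : Fin (n + 1) → ℝ :=
  fun i => z i.succ / z 0

noncomputable def Dg (n : ℕ) (z : Fin (n + 2) → ℝ) :
    (Fin (n + 2) → ℝ) →L[ℝ] (Fin (n + 1) → ℝ) :=
  ContinuousLinearMap.pi fun i => (z 0)⁻¹ • prj i.succ - (z i.succ / z 0 ^ 2) • prj 0

lemma Dg_apply (z v : Fin (n + 2) → ℝ) (i : Fin (n + 1)) :
    Dg n z v i = (z 0)⁻¹ * v i.succ - z i.succ / z 0 ^ 2 * v 0 := rfl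

lemma hasFDerivAt_gm {z : Fin (n + 2) → ℝ} (hz : z 0 ≠ 0) :
    HasFDerivAt (gm n) (Dg n z) z := by
  apply hasFDerivAt_pi.2
  intro i
  have h1 := hasFDerivAt_coord i.succ z
  have h2 : HasFDerivAt (fun w : Fin (n + 2) → ℝ => (w 0)⁻¹)
      ((-mulLeftRight ℝ ℝ (z 0)⁻¹ (z 0)⁻¹).comp (prj 0)) z :=
    (hasFDerivAt_inv' hz).comp z (hasFDerivAt_coord 0 z)
  have h3 := h1.mul h2
  have h4 : HasFDerivAt (fun w : Fin (n + 2) → ℝ => w i.succ / w 0)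
      ((z i.succ) • ((-mulLeftRight ℝ ℝ (z 0)⁻¹ (z 0)⁻¹).comp (prj 0))
        + (z 0)⁻¹ • prj i.succ) z := by
    simpa [div_eq_mul_inv, Pi.mul_def] using h3
  refine h4.congr_fderiv ?_
  ext v
  simp only [ContinuousLinearMap.add_apply, ContinuousLinearMap.smul_apply,
    ContinuousLinearMap.comp_apply, ContinuousLinearMap.proj_apply,
    ContinuousLinearMap.neg_apply, mulLeftRight_apply, ContinuousLinearMap.sub_apply,
    smul_eq_mul]
  field_simp
  ring

lemma pd_of_hasFDerivAt {m : ℕ} {f : (Fin m → ℝ) → ℝ} {L : (Fin m → ℝ) →L[ℝ] ℝ}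
    {x : Fin m → ℝ} (h : HasFDerivAt f L x) (i : Fin m) : pd f i x = L (Pi.single i 1) := by
  rw [pd, h.fderiv]

lemma clm_apply_eq_sum {m : ℕ} (L : (Fin m → ℝ) →L[ℝ] ℝ) (v : Fin m → ℝ) :
    L v = ∑ i, v i * L (Pi.single i 1) := by
  have h2 : ∀ i : Fin m, (fun j => if i = j then (1:ℝ) else 0) = Pi.single i 1 := by
    intro i; funext j; simp [Pi.single_apply, eq_comm]
  have := LinearMap.pi_apply_eq_sum_univ (L : (Fin m → ℝ) →ₗ[ℝ] ℝ) v
  simp only [h2, smul_eq_mul, LinearMap.coe_coe] at this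
  exact this

lemma single_zero_succ (j : Fin (n + 1)) :
    (Pi.single (0 : Fin (n + 2)) (1:ℝ) : Fin (n + 2) → ℝ) j.succ = 0 := by
  simp [Pi.single_apply, Fin.succ_ne_zero]

lemma single_succ_zero (j : Fin (n + 1)) :
    (Pi.single j.succ (1:ℝ) : Fin (n + 2) → ℝ) (0 : Fin (n + 2)) = 0 := by
  simp [Pi.single_apply, (Fin.succ_ne_zero j).symm]

lemma Dg_single_zero {z : Fin (n + 2) → ℝ} :
    Dg n z (Pi.single 0 1) = fun i => -(z i.succ / z 0 ^ 2) := by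
  funext i
  rw [Dg_apply, single_zero_succ, Pi.single_eq_same]
  ring

lemma Dg_single_succ {z : Fin (n + 2) → ℝ} (j : Fin (n + 1)) :
    Dg n z (Pi.single j.succ 1) = Pi.single j (z 0)⁻¹ := by
  funext i
  rw [Dg_apply, single_succ_zero]
  simp [Pi.single_apply, Fin.succ_inj]

section
variable {U : Set (Fin (n + 1) → ℝ)} {ρ : (Fin (n + 1) → ℝ) → ℝ}

lemma hasFDerivAt_homog2 (hU : IsOpen U) (hρ : ContDiffOn ℝ (⊤ : ℕ∞) ρ U)
    {z : Fin (n + 2) → ℝ} (hz : z 0 ≠ 0) (hzU : gm n z ∈ U) :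
    HasFDerivAt (homog2 ρ)
      ((z 0 ^ 2) • ((fderiv ℝ ρ (gm n z)).comp (Dg n z))
        + (ρ (gm n z)) • ((z 0) • prj 0 + (z 0) • prj 0)) z := by
  have hρat : ContDiffAt ℝ (⊤ : ℕ∞) ρ (gm n z) := hρ.contDiffAt (hU.mem_nhds hzU)
  have hd : HasFDerivAt ρ (fderiv ℝ ρ (gm n z)) (gm n z) :=
    (hρat.differentiableAt (by simp)).hasFDerivAt
  have hcomp : HasFDerivAt (fun w => ρ (gm n w)) ((fderiv ℝ ρ (gm n z)).comp (Dg n z)) z :=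
    hd.comp z (hasFDerivAt_gm hz)
  have hsq : HasFDerivAt (fun w : Fin (n + 2) → ℝ => w 0 ^ 2)
      ((z 0) • prj 0 + (z 0) • prj 0) z := by
    have := (hasFDerivAt_coord (0 : Fin (n+2)) z).mul (hasFDerivAt_coord 0 z)
    simpa [pow_two, Pi.mul_def] using this
  exact hsq.mul hcomp

lemma pd_homog2_succ (hU : IsOpen U) (hρ : ContDiffOn ℝ (⊤ : ℕ∞) ρ U)
    {z : Fin (n + 2) → ℝ} (hz : z 0 ≠ 0) (hzU : gm n z ∈ U) (j : Fin (n + 1)) :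
    pd (homog2 ρ) j.succ z = z 0 * pd ρ j (gm n z) := by
  rw [pd_of_hasFDerivAt (hasFDerivAt_homog2 hU hρ hz hzU)]
  simp only [ContinuousLinearMap.add_apply, ContinuousLinearMap.smul_apply,
    ContinuousLinearMap.comp_apply, smul_eq_mul, ContinuousLinearMap.proj_apply]
  rw [Dg_single_succ j, single_succ_zero]
  have : (Pi.single j (z 0)⁻¹ : Fin (n+1) → ℝ)
      = (z 0)⁻¹ • (Pi.single j 1 : Fin (n+1) → ℝ) := by
    funext i; simp [Pi.single_apply]
  rw [this, (fderiv ℝ ρ (gm n z)).map_smul]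
  have hpd : fderiv ℝ ρ (gm n z) (Pi.single j 1) = pd ρ j (gm n z) := rfl
  rw [smul_eq_mul, hpd]
  field_simp
  ring

lemma pd_homog2_zero (hU : IsOpen U) (hρ : ContDiffOn ℝ (⊤ : ℕ∞) ρ U)
    {z : Fin (n + 2) → ℝ} (hz : z 0 ≠ 0) (hzU : gm n z ∈ U) :
    pd (homog2 ρ) 0 z = 2 * z 0 * ρ (gm n z) - ∑ i, z i.succ * pd ρ i (gm n z) := by
  rw [pd_of_hasFDerivAt (hasFDerivAt_homog2 hU hρ hz hzU)]
  simp only [ContinuousLinearMap.add_apply, ContinuousLinearMap.smul_apply,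
    ContinuousLinearMap.comp_apply, smul_eq_mul, ContinuousLinearMap.proj_apply]
  rw [Dg_single_zero, Pi.single_eq_same]
  rw [clm_apply_eq_sum (fderiv ℝ ρ (gm n z)) (fun i => -(z i.succ / z 0 ^ 2))]
  rw [Finset.mul_sum]
  have : ∀ i : Fin (n+1), z 0 ^ 2 * (-(z i.succ / z 0 ^ 2) *
      fderiv ℝ ρ (gm n z) (Pi.single i 1)) = -(z i.succ * pd ρ i (gm n z)) := by
    intro i
    have hpd : fderiv ℝ ρ (gm n z) (Pi.single i 1) = pd ρ i (gm n z) := rfl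
    rw [hpd]
    field_simp
  rw [Finset.sum_congr rfl fun i _ => this i, Finset.sum_neg_distrib]
  ring

end

lemma gm_cons (x : Fin (n + 1) → ℝ) : gm n (Fin.cons 1 x) = x := by
  funext i; simp [gm]

lemma isOpen_W {U : Set (Fin (n + 1) → ℝ)} (hU : IsOpen U) :
    IsOpen {z : Fin (n + 2) → ℝ | z 0 ≠ 0 ∧ gm n z ∈ U} := by
  have hcont : ContinuousOn (gm n) {z : Fin (n + 2) → ℝ | z 0 ≠ 0} := by
    rw [continuousOn_pi]
    intro i
    exact ((continuous_apply i.succ).continuousOn).div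
      ((continuous_apply 0).continuousOn) (fun z hz => hz)
  have h0 : IsOpen {z : Fin (n + 2) → ℝ | z 0 ≠ 0} :=
    isOpen_ne_fun (continuous_apply 0) continuous_const
  exact hcont.isOpen_inter_preimage h0 hU

section
variable {U : Set (Fin (n + 1) → ℝ)} {ρ : (Fin (n + 1) → ℝ) → ℝ}

lemma hess_entries (hU : IsOpen U) (hρ : ContDiffOn ℝ (⊤ : ℕ∞) ρ U)
    {x : Fin (n + 1) → ℝ} (hx : x ∈ U) :
    pd (pd (homog2 ρ) 0) 0 (Fin.cons 1 x)
        = 2 * ρ x - 2 * ∑ k, x k * pd ρ k x + ∑ k, x k * ∑ l, x l * pd (pd ρ k) l x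
    ∧ (∀ i, pd (pd (homog2 ρ) 0) i.succ (Fin.cons 1 x)
        = pd ρ i x - ∑ k, x k * pd (pd ρ k) i x)
    ∧ (∀ j, pd (pd (homog2 ρ) j.succ) 0 (Fin.cons 1 x)
        = pd ρ j x - ∑ k, x k * pd (pd ρ j) k x)
    ∧ (∀ i j, pd (pd (homog2 ρ) j.succ) i.succ (Fin.cons 1 x) = pd (pd ρ j) i x) := by
  set c : Fin (n + 2) → ℝ := Fin.cons 1 x with hc
  have hc0 : c 0 = 1 := rfl
  have hcs : ∀ i : Fin (n + 1), c i.succ = x i := fun i => rfl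
  have hgc : gm n c = x := gm_cons x
  have hcW : c ∈ {z : Fin (n + 2) → ℝ | z 0 ≠ 0 ∧ gm n z ∈ U} := by
    constructor
    · rw [hc0]; exact one_ne_zero
    · rw [hgc]; exact hx
  have hWnhds : {z : Fin (n + 2) → ℝ | z 0 ≠ 0 ∧ gm n z ∈ U} ∈ nhds c :=
    (isOpen_W hU).mem_nhds hcW
  have hEq0 : pd (homog2 ρ) 0 =ᶠ[nhds c]
      fun z => 2 * z 0 * ρ (gm n z) - ∑ k, z k.succ * pd ρ k (gm n z) := by
    filter_upwards [hWnhds] with z hz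
    exact pd_homog2_zero hU hρ hz.1 hz.2
  have hEqs : ∀ j : Fin (n + 1), pd (homog2 ρ) j.succ =ᶠ[nhds c]
      fun z => z 0 * pd ρ j (gm n z) := by
    intro j
    filter_upwards [hWnhds] with z hz
    exact pd_homog2_succ hU hρ hz.1 hz.2 j
  -- smoothness data
  have hρx : ContDiffAt ℝ (⊤ : ℕ∞) ρ x := hρ.contDiffAt (hU.mem_nhds hx)
  have hdρ : HasFDerivAt ρ (fderiv ℝ ρ x) x :=
    (hρx.differentiableAt (by simp)).hasFDerivAt
  have hgmd : HasFDerivAt (gm n) (Dg n c) c := hasFDerivAt_gm (by rw [hc0]; exact one_ne_zero)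
  have hρg : HasFDerivAt (fun z => ρ (gm n z)) ((fderiv ℝ ρ x).comp (Dg n c)) c := by
    have h1 : HasFDerivAt ρ (fderiv ℝ ρ x) (gm n c) := by rw [hgc]; exact hdρ
    exact h1.comp c hgmd
  have hpdC : ∀ i, ContDiffAt ℝ (⊤ : ℕ∞) (pd ρ i) x := by
    intro i
    have h1 : ContDiffAt ℝ (⊤ : ℕ∞) (fderiv ℝ ρ) x :=
      hρx.fderiv_right (by exact_mod_cast le_top)
    have h2 := (ContinuousLinearMap.apply ℝ ℝ
      ((Pi.single i 1) : Fin (n + 1) → ℝ)).contDiff.comp_contDiffAt (x := x) (g := _) h1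
    exact h2
  have hdpd : ∀ i, HasFDerivAt (pd ρ i) (fderiv ℝ (pd ρ i) x) x := fun i =>
    (((hpdC i).differentiableAt (by simp))).hasFDerivAt
  have hpdg : ∀ i, HasFDerivAt (fun z => pd ρ i (gm n z))
      ((fderiv ℝ (pd ρ i) x).comp (Dg n c)) c := by
    intro i
    have h1 : HasFDerivAt (pd ρ i) (fderiv ℝ (pd ρ i) x) (gm n c) := by
      rw [hgc]; exact hdpd i
    exact h1.comp c hgmd
  -- evaluations of Dg at c
  have hDg0 : Dg n c (Pi.single 0 1) = -x := by
    rw [Dg_single_zero]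
    funext i
    rw [hcs i, hc0]
    norm_num
  have hDgs : ∀ j : Fin (n + 1), Dg n c (Pi.single j.succ 1)
      = (Pi.single j 1 : Fin (n + 1) → ℝ) := by
    intro j
    rw [Dg_single_succ, hc0, inv_one]
  have hLx : ∀ L : (Fin (n + 1) → ℝ) →L[ℝ] ℝ, L (-x) = -∑ k, x k * L (Pi.single k 1) := by
    intro L
    rw [map_neg, clm_apply_eq_sum]
  -- derivative of the `j.succ` first partials
  have hPj : ∀ j : Fin (n + 1), HasFDerivAt (fun z => z 0 * pd ρ j (gm n z))
      ((c 0) • ((fderiv ℝ (pd ρ j) x).comp (Dg n c)) + (pd ρ j x) • prj 0) c := by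
    intro j
    have h1 := (hasFDerivAt_coord (0 : Fin (n + 2)) c).mul (hpdg j)
    rwa [hgc] at h1
  -- derivative of the `0` first partial
  have hP0 : HasFDerivAt (fun z => 2 * z 0 * ρ (gm n z) - ∑ k, z k.succ * pd ρ k (gm n z))
      (((2 * c 0) • ((fderiv ℝ ρ x).comp (Dg n c)) + (ρ x) • ((2:ℝ) • prj 0))
        - ∑ k, ((c k.succ) • ((fderiv ℝ (pd ρ k) x).comp (Dg n c)) + (pd ρ k x) • prj k.succ)) c := by
    have h2t : HasFDerivAt (fun z : Fin (n + 2) → ℝ => 2 * z 0) ((2:ℝ) • prj 0) c :=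
      (hasFDerivAt_coord (0 : Fin (n + 2)) c).const_mul 2
    have hterm1 := h2t.mul hρg
    rw [hgc] at hterm1
    have hterm2 : HasFDerivAt (fun z : Fin (n + 2) → ℝ => ∑ k, z k.succ * pd ρ k (gm n z))
        (∑ k, ((c k.succ) • ((fderiv ℝ (pd ρ k) x).comp (Dg n c)) + (pd ρ k x) • prj k.succ)) c := by
      apply HasFDerivAt.fun_sum
      intro k _
      have h1 := (hasFDerivAt_coord (k.succ) c).mul (hpdg k)
      rwa [hgc] at h1
    have := hterm1.sub hterm2
    convert this using 2
    all_goals rfl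
  refine ⟨?_, ?_, ?_, ?_⟩
  · show fderiv ℝ (pd (homog2 ρ) 0) c (Pi.single 0 1) = _
    rw [hEq0.fderiv_eq, hP0.fderiv]
    simp only [ContinuousLinearMap.sub_apply, ContinuousLinearMap.add_apply,
      ContinuousLinearMap.smul_apply, ContinuousLinearMap.comp_apply, smul_eq_mul,
      ContinuousLinearMap.coe_sum', Finset.sum_apply, ContinuousLinearMap.proj_apply]
    rw [hDg0, hLx]
    rw [Pi.single_eq_same, hc0]
    have : ∀ k : Fin (n + 1), c k.succ * (fderiv ℝ (pd ρ k) x) (-x)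
        + pd ρ k x * (Pi.single (0 : Fin (n+2)) (1:ℝ) : Fin (n+2) → ℝ) k.succ
        = -(x k * ∑ l, x l * pd (pd ρ k) l x) := by
      intro k
      rw [hcs k, hLx, single_zero_succ]
      have : ∀ l : Fin (n+1), x l * (fderiv ℝ (pd ρ k) x) (Pi.single l 1)
          = x l * pd (pd ρ k) l x := fun l => rfl
      rw [Finset.sum_congr rfl fun l _ => this l]
      ring
    rw [Finset.sum_congr rfl fun k _ => this k, Finset.sum_neg_distrib]
    have : ∀ k : Fin (n+1), x k * (fderiv ℝ ρ x) (Pi.single k 1) = x k * pd ρ k x := fun k => rfl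
    rw [Finset.sum_congr rfl fun k _ => this k]
    ring
  · intro i
    show fderiv ℝ (pd (homog2 ρ) 0) c (Pi.single i.succ 1) = _
    rw [hEq0.fderiv_eq, hP0.fderiv]
    simp only [ContinuousLinearMap.sub_apply, ContinuousLinearMap.add_apply,
      ContinuousLinearMap.smul_apply, ContinuousLinearMap.comp_apply, smul_eq_mul,
      ContinuousLinearMap.coe_sum', Finset.sum_apply, ContinuousLinearMap.proj_apply]
    rw [hDgs i, single_succ_zero, hc0]
    have h1 : (fderiv ℝ ρ x) (Pi.single i 1) = pd ρ i x := rfl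
    rw [h1]
    have h2 : ∀ k : Fin (n + 1), c k.succ * (fderiv ℝ (pd ρ k) x) (Pi.single i 1)
        + pd ρ k x * (Pi.single i.succ (1:ℝ) : Fin (n+2) → ℝ) k.succ
        = x k * pd (pd ρ k) i x + pd ρ k x * (if k = i then 1 else 0) := by
      intro k
      rw [hcs k]
      congr 1
      congr 1
      simp [Pi.single_apply, Fin.succ_inj]
    rw [Finset.sum_congr rfl fun k _ => h2 k, Finset.sum_add_distrib]
    have h3 : (∑ k : Fin (n+1), pd ρ k x * (if k = i then 1 else 0)) = pd ρ i x := by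
      simp [mul_ite]
    rw [h3]
    ring
  · intro j
    show fderiv ℝ (pd (homog2 ρ) j.succ) c (Pi.single 0 1) = _
    rw [(hEqs j).fderiv_eq, (hPj j).fderiv]
    simp only [ContinuousLinearMap.add_apply, ContinuousLinearMap.smul_apply,
      ContinuousLinearMap.comp_apply, smul_eq_mul, ContinuousLinearMap.proj_apply]
    rw [hDg0, hLx, hc0, Pi.single_eq_same]
    have h4 : ∀ k : Fin (n+1), x k * (fderiv ℝ (pd ρ j) x) (Pi.single k 1)
        = x k * pd (pd ρ j) k x := fun k => rfl
    rw [Finset.sum_congr rfl fun k _ => h4 k]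
    ring
  · intro i j
    show fderiv ℝ (pd (homog2 ρ) j.succ) c (Pi.single i.succ 1) = _
    rw [(hEqs j).fderiv_eq, (hPj j).fderiv]
    simp only [ContinuousLinearMap.add_apply, ContinuousLinearMap.smul_apply,
      ContinuousLinearMap.comp_apply, smul_eq_mul, ContinuousLinearMap.proj_apply]
    rw [hDgs i, single_succ_zero, hc0]
    have h1 : (fderiv ℝ (pd ρ j) x) (Pi.single i 1) = pd (pd ρ j) i x := rfl
    rw [h1]
    ring

end

noncomputable def Amat (n : ℕ) (x : Fin (n + 1) → ℝ) : Matrix (Fin (n + 2)) (Fin (n + 2)) ℝ :=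
  Matrix.of fun I J : Fin (n + 2) =>
    Fin.cases (Fin.cases (1:ℝ) (fun _ => 0) J)
      (fun i => Fin.cases (-x i) (fun j => if i = j then 1 else 0) J) I

def sumEquiv (n : ℕ) : Unit ⊕ Fin (n + 1) ≃ Fin (n + 2) where
  toFun := Sum.elim (fun _ => 0) Fin.succ
  invFun := Fin.cases (Sum.inl ()) Sum.inr
  left_inv := by rintro (u | i) <;> simp
  right_inv := by
    intro I
    induction I using Fin.cases <;> simp

lemma detA (x : Fin (n + 1) → ℝ) : (Amat n x).det = 1 := by
  rw [← Matrix.det_submatrix_equiv_self (sumEquiv n)]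
  have h : (Amat n x).submatrix (sumEquiv n) (sumEquiv n)
      = Matrix.fromBlocks (1 : Matrix Unit Unit ℝ) 0
        (Matrix.of fun i (_ : Unit) => -x i) (1 : Matrix (Fin (n+1)) (Fin (n+1)) ℝ) := by
    ext i j
    rcases i with u | i <;> rcases j with u' | j <;>
      simp [Amat, sumEquiv, Matrix.one_apply, Matrix.submatrix_apply]
  rw [h, Matrix.det_fromBlocks_zero₁₂, Matrix.det_one, Matrix.det_one, mul_one]

section prodlemmas
variable {x : Fin (n + 1) → ℝ} (M B : Matrix (Fin (n + 2)) (Fin (n + 2)) ℝ)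

lemma B_zero (L : Fin (n + 2)) :
    ((Amat n x).transpose * M) 0 L = M 0 L - ∑ k, x k * M k.succ L := by
  rw [Matrix.mul_apply, Fin.sum_univ_succ]
  simp [Amat, neg_mul, sub_eq_add_neg, Finset.sum_neg_distrib]

lemma B_succ (i : Fin (n + 1)) (L : Fin (n + 2)) :
    ((Amat n x).transpose * M) i.succ L = M i.succ L := by
  rw [Matrix.mul_apply, Fin.sum_univ_succ]
  simp [Amat, ite_mul]

lemma C_zero (I : Fin (n + 2)) :
    (B * Amat n x) I 0 = B I 0 - ∑ l, x l * B I l.succ := by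
  rw [Matrix.mul_apply, Fin.sum_univ_succ]
  simp only [Amat, Matrix.of_apply, Fin.cases_zero, Fin.cases_succ, mul_one, mul_neg]
  rw [Finset.sum_neg_distrib, sub_eq_add_neg]
  congr 1
  congr 1
  exact Finset.sum_congr rfl fun l _ => by ring

lemma C_succ (I : Fin (n + 2)) (j : Fin (n + 1)) :
    (B * Amat n x) I j.succ = B I j.succ := by
  rw [Matrix.mul_apply, Fin.sum_univ_succ]
  simp [Amat, mul_ite, eq_comm]

end prodlemmas


end Stmt18Aux

/-- The determinant of the full `(n+2)×(n+2)` Hessian of the homogeneous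
extension `ρ̃` at `(1,x)` equals `J[ρ](x)`. -/
theorem stmt18 (n : ℕ) (U : Set (Fin (n + 1) → ℝ)) (hU : IsOpen U)
    (ρ : (Fin (n + 1) → ℝ) → ℝ) (hρ : ContDiffOn ℝ (⊤ : ℕ∞) ρ U) :
    ∀ x ∈ U, (hess (homog2 ρ) (Fin.cons 1 x)).det = Jop ρ x := by
  intro x hx
  obtain ⟨e00, e0s, es0, ess⟩ := hess_entries hU hρ hx
  set M : Matrix (Fin (n + 2)) (Fin (n + 2)) ℝ := Matrix.of (fun I J : Fin (n + 2) =>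
    Fin.cases (Fin.cases (2 * ρ x) (fun j => pd ρ j x) J)
      (fun i => Fin.cases (pd ρ i x) (fun j => hess ρ x i j) J) I) with hM
  have hM00 : M 0 0 = 2 * ρ x := by simp [hM]
  have hM0s : ∀ l : Fin (n + 1), M 0 l.succ = pd ρ l x := by intro l; simp [hM]
  have hMs0 : ∀ k : Fin (n + 1), M k.succ 0 = pd ρ k x := by intro k; simp [hM]
  have hMss : ∀ k l : Fin (n + 1), M k.succ l.succ = pd (pd ρ l) k x := by
    intro k l; simp [hM, hess]
  have key : hess (homog2 ρ) (Fin.cons 1 x) = (Amat n x).transpose * M * Amat n x := by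
    ext I J
    induction J using Fin.cases with
    | zero =>
      rw [C_zero]
      induction I using Fin.cases with
      | zero =>
        show pd (pd (homog2 ρ) 0) 0 (Fin.cons 1 x) = _
        rw [e00]
        simp only [B_zero, hM00, hM0s, hMs0, hMss, mul_sub, Finset.sum_sub_distrib]
        ring
      | succ i =>
        show pd (pd (homog2 ρ) 0) i.succ (Fin.cons 1 x) = _
        rw [e0s i]
        simp only [B_succ, hMs0, hMss]
    | succ j =>
      rw [C_succ]
      induction I using Fin.cases with
      | zero =>
        show pd (pd (homog2 ρ) j.succ) 0 (Fin.cons 1 x) = _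
        rw [es0 j]
        simp only [B_zero, hM0s, hMss]
      | succ i =>
        show pd (pd (homog2 ρ) j.succ) i.succ (Fin.cons 1 x) = _
        rw [ess i j]
        simp only [B_succ, hMss]
  rw [key, Matrix.det_mul, Matrix.det_mul, Matrix.det_transpose, detA, one_mul, mul_one]
  rfl
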